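/- Let m ≥ 2 and let b_1 < b_2 < ⋯ < b_m be integers. If there are infinitely many integers x such that x + b_1, x + b_2, …, x + b_m are all prime, then there exists a prime p with 2·p > b_m − b_1 such that the sequence of differences s_b = (b_2 − b_1, b_3 − b_2, …, b_m − b_{m−1}) occurs in the cycle of gaps Δ(p). (This is the unconditional direction of the equivalence between Hardy and Littlewood's prime k-tuple conjecture and its formulation in terms of constellations.) -/

import Mathlib

/-- `nthPrime k` is the k-th prime `p_k` (1-indexed: `p_1 = 2`). -/
noncomputable def nthPrime (k : ℕ) : ℕ := Nat.nth Nat.Prime (k - 1)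

/-- `primor k` is the primorial `Π_k = p_1 ⋯ p_k`. -/
noncomputable def primor (k : ℕ) : ℕ := ∏ i ∈ Finset.range k, Nat.nth Nat.Prime i

/-- The constellation (list of gaps) `s` occurs at `c` in the cycle of gaps modulo `N`. -/
def OccursAt (N : ℕ) : List ℕ → ℕ → Prop
  | [], c => Nat.Coprime c N
  | a :: t, c => Nat.Coprime c N ∧ (∀ m : ℕ, c < m → m < c + a → ¬ Nat.Coprime m N) ∧
      OccursAt N t (c + a)

/-- The constellation `s` occurs (somewhere) in the cycle of gaps modulo `N`. -/
def Occurs (N : ℕ) (s : List ℕ) : Prop := ∃ c : ℕ, 1 ≤ c ∧ OccursAt N s c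

/-- Strict monotonicity of `Nat.nth Nat.Prime`. -/
lemma nthP_strictMono : StrictMono (Nat.nth Nat.Prime) :=
  fun _ _ h => (Nat.nth_lt_nth Nat.infinite_setOf_prime).mpr h

lemma self_le_nthP (n : ℕ) : n ≤ Nat.nth Nat.Prime n :=
  nthP_strictMono.le_apply

/-- A sufficient criterion for `OccursAt`. -/
lemma occursAt_of (N : ℕ) (s : List ℕ) (c : ℕ)
    (h1 : ∀ k, k ≤ s.length → Nat.Coprime (c + (s.take k).sum) N)
    (h2 : ∀ x : ℕ, c < x → x < c + s.sum → (∀ k, x ≠ c + (s.take k).sum) →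
      ¬ Nat.Coprime x N) :
    OccursAt N s c := by
  induction s generalizing c with
  | nil => simpa [OccursAt] using h1 0 (by simp)
  | cons a t ih =>
    have hsum : (a :: t).sum = a + t.sum := by simp
    refine ⟨by simpa using h1 0 (by simp), ?_, ?_⟩
    · intro x hx1 hx2
      refine h2 x hx1 (by omega) ?_
      intro k
      cases k with
      | zero => simpa using hx1.ne'
      | succ k =>
        have : ((a :: t).take (k + 1)).sum = a + (t.take k).sum := by
          simp [List.take_succ_cons]
        omega
    · refine ih (c + a) ?_ ?_
      · intro k hk
        have := h1 (k + 1) (by simpa using hk)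
        have he : ((a :: t).take (k + 1)).sum = a + (t.take k).sum := by
          simp [List.take_succ_cons]
        rw [he] at this
        rwa [← Nat.add_assoc] at this
      · intro x hx1 hx2 hx3
        refine h2 x (by omega) (by omega) ?_
        intro k
        cases k with
        | zero => simp; omega
        | succ k =>
          have := hx3 k
          have he : ((a :: t).take (k + 1)).sum = a + (t.take k).sum := by
            simp [List.take_succ_cons]
          omega

/-- Chinese remainder theorem for the first `K` primes, integer version. -/
lemma crt_primes (K : ℕ) (r : ℕ → ℤ) :
    ∃ c : ℤ, ∀ i, i < K → (Nat.nth Nat.Prime i : ℤ) ∣ (c - r i) := by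
  induction K with
  | zero => exact ⟨0, fun i hi => absurd hi (Nat.not_lt_zero i)⟩
  | succ K ih =>
    obtain ⟨c, hc⟩ := ih
    set P : ℕ := ∏ i ∈ Finset.range K, Nat.nth Nat.Prime i with hP
    have hcop : IsCoprime (P : ℤ) ((Nat.nth Nat.Prime K : ℕ) : ℤ) := by
      rw [Nat.isCoprime_iff_coprime]
      refine Nat.Coprime.prod_left fun i hi =>
        (Nat.coprime_primes (Nat.prime_nth_prime i) (Nat.prime_nth_prime K)).mpr
          (ne_of_lt (nthP_strictMono (Finset.mem_range.mp hi)))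
    obtain ⟨u, v, huv⟩ := hcop
    refine ⟨c + (P : ℤ) * (u * (r K - c)), fun i hi => ?_⟩
    rcases Nat.lt_succ_iff_lt_or_eq.mp hi with hi | rfl
    · have hd1 : (Nat.nth Nat.Prime i : ℤ) ∣ (c - r i) := hc i hi
      have hd2 : (Nat.nth Nat.Prime i : ℤ) ∣ (P : ℤ) := by
        exact_mod_cast Int.natCast_dvd_natCast.mpr
          (Finset.dvd_prod_of_mem _ (Finset.mem_range.mpr hi))
      have : c + (P : ℤ) * (u * (r K - c)) - r i
          = (c - r i) + (P : ℤ) * (u * (r K - c)) := by ring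
      rw [this]
      exact dvd_add hd1 (Dvd.dvd.mul_right hd2 _)
    · have : c + (P : ℤ) * (u * (r i - c)) - r i
          = ((c - r i) * v) * (Nat.nth Nat.Prime i : ℤ) := by
        linear_combination (r i - c) * huv
      rw [this]
      exact dvd_mul_left _ _

/-- An infinite set of integers contains elements of arbitrarily large absolute value. -/
lemma exists_big_abs {s : Set ℤ} (hs : s.Infinite) (M : ℤ) : ∃ x ∈ s, M < |x| := by
  by_contra h
  push_neg at h
  exact hs (Set.Finite.subset (Set.finite_Icc (-M) M)
    (fun x hx => Set.mem_Icc.mpr (abs_le.mp (h x hx))))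

theorem stmt_17 (m : ℕ) (hm : 2 ≤ m) (b : ℕ → ℤ)
    (hmono : ∀ i : ℕ, 1 ≤ i → i < m → b i < b (i + 1))
    (hinf : {x : ℤ | ∀ i : ℕ, 1 ≤ i → i ≤ m → Prime (x + b i)}.Infinite) :
    ∃ K : ℕ, 1 ≤ K ∧ b m - b 1 < 2 * (nthPrime K : ℤ) ∧
      Occurs (primor K)
        ((List.range (m - 1)).map (fun i => (b (i + 2) - b (i + 1)).toNat)) := by
  classical
  -- monotonicity of b on [1, m]
  have hble : ∀ j, ∀ i, 1 ≤ i → i ≤ j → j ≤ m → b i ≤ b j := by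
    intro j
    induction j with
    | zero => intro i h1 h2 _; omega
    | succ j ih =>
      intro i h1 h2 h3
      rcases Nat.eq_or_lt_of_le h2 with rfl | h
      · exact le_refl _
      · have h4 : i ≤ j := by omega
        have := ih i h1 h4 (by omega)
        have := hmono j (by omega) (by omega)
        omega
  set s : List ℕ := (List.range (m - 1)).map (fun i => (b (i + 2) - b (i + 1)).toNat) with hs
  have hslen : s.length = m - 1 := by simp [hs]
  -- partial sums of s
  have hpsum : ∀ k, k ≤ m - 1 → (((s.take k).sum : ℕ) : ℤ) = b (k + 1) - b 1 := by
    intro k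
    induction k with
    | zero => intro _; simp
    | succ k ih =>
      intro hk
      have hk1 : k < s.length := by omega
      rw [List.sum_take_succ _ _ hk1, Nat.cast_add]
      have hgetk : s[k] = (b (k + 2) - b (k + 1)).toNat := by
        simp [hs]
      have hpos : (0 : ℤ) ≤ b (k + 2) - b (k + 1) := by
        have h : b (k + 1) < b (k + 2) := hmono (k + 1) (by omega) (by omega)
        omega
      rw [ih (by omega), hgetk, Int.toNat_of_nonneg hpos,
        show k + 1 + 1 = k + 2 from rfl]
      ring
  set S : ℕ := s.sum with hS
  have hSsum : (S : ℤ) = b m - b 1 := by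
    have : s.take (m - 1) = s := by rw [List.take_of_length_le (by omega)]
    have h2 := hpsum (m - 1) le_rfl
    rw [this] at h2
    have hm1 : m - 1 + 1 = m := by omega
    rw [hm1] at h2
    exact h2
  have hS1 : 1 ≤ S := by
    have h12 : b 1 < b 2 := hmono 1 le_rfl (by omega)
    have h2m : b 2 ≤ b m := hble m 2 (by omega) hm le_rfl
    omega
  -- the distances from b 1
  set D : ℕ → ℕ := fun j => (b j - b 1).toNat with hD
  have hDcast : ∀ j, 1 ≤ j → j ≤ m → ((D j : ℕ) : ℤ) = b j - b 1 := by
    intro j h1 h2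
    exact Int.toNat_of_nonneg (by have := hble j 1 le_rfl h1 h2; omega)
  have hDle : ∀ j, 1 ≤ j → j ≤ m → D j ≤ S := by
    intro j h1 h2
    have := hDcast j h1 h2
    have := hble m j h1 h2 le_rfl
    omega
  have hDpsum : ∀ j, 1 ≤ j → j ≤ m → (s.take (j - 1)).sum = D j := by
    intro j h1 h2
    have hc := hpsum (j - 1) (by omega)
    have hj : j - 1 + 1 = j := by omega
    rw [hj] at hc
    have := hDcast j h1 h2
    omega
  -- interior offsets
  set IsIn : ℕ → Prop := fun t => 1 ≤ t ∧ t < S ∧ ∀ j, 1 ≤ j → j ≤ m → D j ≠ t with hIsIn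
  set K : ℕ := 2 * S + 2 with hK
  set P : ℕ := Nat.nth Nat.Prime (K - 1) with hPdef
  have hPbig : ∀ i, i < K → Nat.nth Nat.Prime i ≤ P := by
    intro i hi
    exact nthP_strictMono.monotone (by omega)
  -- pick a witness x₀ of large absolute value
  obtain ⟨x₀, hx₀mem, hx₀big⟩ := exists_big_abs hinf ((P : ℤ) + |b 1| + S)
  have hx₀prime : ∀ j, 1 ≤ j → j ≤ m → Prime (x₀ + b j) := hx₀mem
  have hx₀abs : ∀ j, 1 ≤ j → j ≤ m → (P : ℤ) < |x₀ + b j| := by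
    intro j h1 h2
    have hbj : |b j| ≤ |b 1| + S := by
      have l1 := hble j 1 le_rfl h1 h2
      have l2 := hble m j h1 h2 le_rfl
      rw [abs_le]
      constructor
      · have := neg_abs_le (b 1); omega
      · have := le_abs_self (b 1); omega
    have := abs_sub_abs_le_abs_sub x₀ (-(b j))
    simp only [sub_neg_eq_add, abs_neg] at this
    omega
  have hnodvd : ∀ i, i < K → ∀ j, 1 ≤ j → j ≤ m →
      ¬ ((Nat.nth Nat.Prime i : ℤ) ∣ (x₀ + b j)) := by
    intro i hi j h1 h2 hdvd
    have hp : (Nat.nth Nat.Prime i).Prime := Nat.prime_nth_prime i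
    have hz : (x₀ + b j).natAbs.Prime := Int.prime_iff_natAbs_prime.mp (hx₀prime j h1 h2)
    have hdvd2 : Nat.nth Nat.Prime i ∣ (x₀ + b j).natAbs := by
      rw [← Int.natAbs_natCast (Nat.nth Nat.Prime i)]
      exact Int.natAbs_dvd_natAbs.mpr hdvd
    have heq : Nat.nth Nat.Prime i = (x₀ + b j).natAbs :=
      (Nat.prime_dvd_prime_iff_eq hp hz).mp hdvd2
    have habs := hx₀abs j h1 h2
    have hle := hPbig i hi
    rw [Int.abs_eq_natAbs] at habs
    omega
  -- residues
  set r : ℕ → ℤ := fun i =>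
    if h : S + 1 ≤ i ∧ IsIn (i - (S + 1)) then -((i - (S + 1) : ℕ) : ℤ) else x₀ + b 1
    with hr
  obtain ⟨c₀, hc₀⟩ := crt_primes K r
  set N : ℕ := primor K with hN
  have hNpos : 0 < N := by
    refine Finset.prod_pos fun i _ => (Nat.prime_nth_prime i).pos
  -- the natural number c
  set c : ℕ := (c₀ % (N : ℤ)).toNat + N with hc
  have hcval : (c : ℤ) = c₀ % (N : ℤ) + N := by
    have : (0 : ℤ) ≤ c₀ % (N : ℤ) := Int.emod_nonneg c₀ (by exact_mod_cast hNpos.ne')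
    push_cast [hc]
    rw [Int.toNat_of_nonneg this]
  have hNdvd : ∀ i, i < K → (Nat.nth Nat.Prime i : ℤ) ∣ (N : ℤ) := by
    intro i hi
    exact_mod_cast Int.natCast_dvd_natCast.mpr
      (Finset.dvd_prod_of_mem _ (Finset.mem_range.mpr hi))
  have hcong : ∀ i, i < K → (Nat.nth Nat.Prime i : ℤ) ∣ ((c : ℤ) - r i) := by
    intro i hi
    have h1 : (N : ℤ) ∣ ((c : ℤ) - c₀) := by
      rw [hcval, Int.emod_def]
      exact ⟨1 - c₀ / N, by ring⟩
    have h2 : (Nat.nth Nat.Prime i : ℤ) ∣ ((c : ℤ) - c₀) := dvd_trans (hNdvd i hi) h1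
    have : (c : ℤ) - r i = ((c : ℤ) - c₀) + (c₀ - r i) := by ring
    rw [this]
    exact dvd_add h2 (hc₀ i hi)
  -- Claim A : c + D j is coprime to N for 1 ≤ j ≤ m
  have claimA : ∀ j, 1 ≤ j → j ≤ m → Nat.Coprime (c + D j) N := by
    intro j h1 h2
    refine Nat.Coprime.prod_right fun i hi => ?_
    have hiK : i < K := Finset.mem_range.mp hi
    have hp : (Nat.nth Nat.Prime i).Prime := Nat.prime_nth_prime i
    refine Nat.Coprime.symm ((hp.coprime_iff_not_dvd).mpr ?_)
    intro hdvd
    have hdvdZ : (Nat.nth Nat.Prime i : ℤ) ∣ ((c : ℤ) + (D j : ℤ)) := by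
      exact_mod_cast Int.natCast_dvd_natCast.mpr hdvd
    have hdr : (Nat.nth Nat.Prime i : ℤ) ∣ (r i + (D j : ℤ)) := by
      have : r i + (D j : ℤ) = ((c : ℤ) + (D j : ℤ)) - ((c : ℤ) - r i) := by ring
      rw [this]
      exact dvd_sub hdvdZ (hcong i hiK)
    by_cases hcase : S + 1 ≤ i ∧ IsIn (i - (S + 1))
    · -- assigned prime: r i = -t
      set t : ℕ := i - (S + 1) with ht
      have hrval : r i = -((t : ℕ) : ℤ) := by rw [hr]; exact dif_pos hcase
      rw [hrval] at hdr
      have hz : -((t : ℕ) : ℤ) + (D j : ℤ) = (D j : ℤ) - (t : ℤ) := by ring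
      rw [hz] at hdr
      have htS : t < S := hcase.2.2.1
      have hDjS : D j ≤ S := hDle j h1 h2
      have hne : D j ≠ t := hcase.2.2.2 j h1 h2
      have hzero : ((D j : ℤ) - (t : ℤ)) ≠ 0 := by
        intro h; apply hne; omega
      have habs : |((D j : ℤ) - (t : ℤ))| ≤ (S : ℤ) := by
        rw [abs_le]; omega
      have hplarge : (S : ℤ) < (Nat.nth Nat.Prime i : ℤ) := by
        have := self_le_nthP i
        have : S + 1 ≤ Nat.nth Nat.Prime i := le_trans hcase.1 (self_le_nthP i)
        omega
      have hle := Int.le_of_dvd (abs_pos.mpr hzero) ((dvd_abs _ _).mpr hdr)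
      omega
    · -- unassigned prime: r i = x₀ + b 1
      have hrval : r i = x₀ + b 1 := by rw [hr]; exact dif_neg hcase
      rw [hrval] at hdr
      have : x₀ + b 1 + (D j : ℤ) = x₀ + b j := by
        have := hDcast j h1 h2; omega
      rw [this] at hdr
      exact hnodvd i hiK j h1 h2 hdr
  -- Claim B : interior positions are not coprime to N
  have claimB : ∀ x : ℕ, c < x → x < c + S → IsIn (x - c) → ¬ Nat.Coprime x N := by
    intro x hx1 hx2 hIn hco
    set t : ℕ := x - c with ht
    set i : ℕ := S + 1 + t with hi
    have hiK : i < K := by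
      have := hIn.2.1
      omega
    have hcond : S + 1 ≤ i ∧ IsIn (i - (S + 1)) := by
      constructor
      · omega
      · have : i - (S + 1) = t := by omega
        rw [this]; exact hIn
    have hrval : r i = -((i - (S + 1) : ℕ) : ℤ) := by rw [hr]; exact dif_pos hcond
    have hit : i - (S + 1) = t := by omega
    rw [hit] at hrval
    have hdvdZ : (Nat.nth Nat.Prime i : ℤ) ∣ (x : ℤ) := by
      have h0 := hcong i hiK
      rw [hrval] at h0
      have : (x : ℤ) = ((c : ℤ) - -((t : ℕ) : ℤ)) := by
        have : x = c + t := by omega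
        push_cast [this]; ring
      rw [this]
      exact h0
    have hdvdN : Nat.nth Nat.Prime i ∣ x := by exact_mod_cast hdvdZ
    have hdN : Nat.nth Nat.Prime i ∣ N :=
      Finset.dvd_prod_of_mem _ (Finset.mem_range.mpr hiK)
    have : Nat.nth Nat.Prime i ∣ 1 := hco ▸ Nat.dvd_gcd hdvdN hdN
    have := Nat.le_of_dvd one_pos this
    have := (Nat.prime_nth_prime i).two_le
    omega
  -- assemble
  refine ⟨K, by omega, ?_, c, by omega, ?_⟩
  · -- b m - b 1 < 2 * nthPrime K
    have h1 : nthPrime K = Nat.nth Nat.Prime (K - 1) := rfl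
    have h2 : K - 1 ≤ Nat.nth Nat.Prime (K - 1) := self_le_nthP (K - 1)
    rw [h1]
    have : (S : ℤ) < 2 * (Nat.nth Nat.Prime (K - 1) : ℤ) := by
      have : S < K - 1 := by omega
      omega
    omega
  · refine occursAt_of N s c ?_ ?_
    · intro k hk
      have hk' : k ≤ m - 1 := by omega
      have : (s.take k).sum = D (k + 1) := by
        have h1 := hpsum k hk'
        have h2 := hDcast (k + 1) (by omega) (by omega)
        omega
      rw [this]
      exact claimA (k + 1) (by omega) (by omega)
    · intro x hx1 hx2 hx3
      refine claimB x hx1 hx2 ?_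
      refine ⟨by omega, by omega, ?_⟩
      intro j h1 h2 hDj
      have h3 := hDpsum j h1 h2
      have := hx3 (j - 1)
      omega
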